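/- Let R be a strongly right C4*-ring. Assume that R = Σ × T for rings Σ and T, where Σ is semisimple artinian, the right regular module T_T is summand-square-free, and T satisfies the hereditary side-transfer condition HST and the corner-stability axiom CSA. Then R is a strongly left C4*-ring. -/

import Mathlib

open MulOpposite

section C4Defs

/-- A submodule is a direct summand if it has a complement. -/
def IsDirectSummand {R M : Type*} [Ring R] [AddCommGroup M] [Module R M]
    (A : Submodule R M) : Prop :=
  ∃ B : Submodule R M, IsCompl A B

/-- `M` is a `C4`-module over `R`: for every internal direct sum decomposition `M = A ⊕ B`
and every homomorphism `f : A → B` whose kernel is a direct summand of `A`, the image of `f`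
is a direct summand of `B`. -/
def IsC4Module (R M : Type*) [Ring R] [AddCommGroup M] [Module R M] : Prop :=
  ∀ A B : Submodule R M, IsCompl A B → ∀ f : A →ₗ[R] B,
    IsDirectSummand (LinearMap.ker f) → IsDirectSummand (LinearMap.range f)

/-- `M` is a `C4*`-module: every submodule of `M` is a `C4`-module. -/
def IsC4StarModule (R M : Type*) [Ring R] [AddCommGroup M] [Module R M] : Prop :=
  ∀ N : Submodule R M, IsC4Module R N

/-- `M` is square-free: no nonzero submodules `A`, `B` with `A ⊓ B = ⊥` and `A ≅ B`. -/
def IsSquareFreeModule (R M : Type*) [Ring R] [AddCommGroup M] [Module R M] : Prop :=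
  ∀ A B : Submodule R M, A ≠ ⊥ → B ≠ ⊥ → A ⊓ B = ⊥ → IsEmpty (A ≃ₗ[R] B)

/-- `M` is summand-square-free: no nonzero direct summands `A`, `B` with `A ⊓ B = ⊥`
and `A ≅ B`. -/
def IsSummandSquareFree (R M : Type*) [Ring R] [AddCommGroup M] [Module R M] : Prop :=
  ∀ A B : Submodule R M, IsDirectSummand A → IsDirectSummand B →
    A ≠ ⊥ → B ≠ ⊥ → A ⊓ B = ⊥ → IsEmpty (A ≃ₗ[R] B)

/-- `X` is an essential submodule of `A`. -/
def IsEssentialIn {R M : Type*} [Ring R] [AddCommGroup M] [Module R M]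
    (X A : Submodule R M) : Prop :=
  X ≤ A ∧ ∀ N : Submodule R M, N ≤ A → N ≠ ⊥ → X ⊓ N ≠ ⊥

/-- A triple `(X, Y, f)` where `X`, `Y` are semisimple direct summands of `M` with
`X ⊓ Y = ⊥` and `f : X ≅ Y` an isomorphism.  These are the elements of the poset `S(M)`
from the definition of semi-weak-CS modules. -/
structure SWTriple (R M : Type*) [Ring R] [AddCommGroup M] [Module R M] where
  X : Submodule R M
  Y : Submodule R M
  semisimpleX : IsSemisimpleModule R X
  semisimpleY : IsSemisimpleModule R Y
  summandX : IsDirectSummand X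
  summandY : IsDirectSummand Y
  disj : X ⊓ Y = ⊥
  f : X ≃ₗ[R] Y

/-- The extension order on the poset `S(M)` of triples: `(X₁,Y₁,f₁) ≤ (X₂,Y₂,f₂)` iff
`X₁ ≤ X₂`, `Y₁ ≤ Y₂` and `f₂` restricts to `f₁` on `X₁`. -/
def SWTriple.Extends {R M : Type*} [Ring R] [AddCommGroup M] [Module R M]
    (t s : SWTriple R M) : Prop :=
  ∃ hX : t.X ≤ s.X, t.Y ≤ s.Y ∧
    ∀ x : t.X, (s.f ⟨x.1, hX x.2⟩ : M) = (t.f x : M)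

/-- `M` is semi-weak-CS: for every chain in the poset `S(M)`, with `X` the union of the first
components and `Y` the union of the second components, there are direct summands `A`, `B`
of `M` with `X` essential in `A` and `Y` essential in `B`. -/
def IsSemiWeakCS (R M : Type*) [Ring R] [AddCommGroup M] [Module R M] : Prop :=
  ∀ C : Set (SWTriple R M), IsChain SWTriple.Extends C →
    ∃ A B : Submodule R M, IsDirectSummand A ∧ IsDirectSummand B ∧
      IsEssentialIn (⨆ t ∈ C, t.X) A ∧ IsEssentialIn (⨆ t ∈ C, t.Y) B

/-- `M` is strongly `C4*` if it is both semi-weak-CS and `C4*`. -/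
def IsStronglyC4StarModule (R M : Type*) [Ring R] [AddCommGroup M] [Module R M] : Prop :=
  IsSemiWeakCS R M ∧ IsC4StarModule R M

/-- `R` is a right `C4*`-ring: the right regular module `R_R` (i.e. `R` as a module over
`Rᵐᵒᵖ`) is a `C4*`-module. -/
def IsRightC4StarRing (R : Type*) [Ring R] : Prop := IsC4StarModule Rᵐᵒᵖ R

/-- `R` is a left `C4*`-ring: the left regular module `_RR` is a `C4*`-module. -/
def IsLeftC4StarRing (R : Type*) [Ring R] : Prop := IsC4StarModule R R

/-- `R` is a strongly right `C4*`-ring. -/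
def IsStronglyRightC4StarRing (R : Type*) [Ring R] : Prop := IsStronglyC4StarModule Rᵐᵒᵖ R

/-- `R` is a strongly left `C4*`-ring. -/
def IsStronglyLeftC4StarRing (R : Type*) [Ring R] : Prop := IsStronglyC4StarModule R R

/-- `R` is right semi-weak-CS. -/
def IsRightSemiWeakCSRing (R : Type*) [Ring R] : Prop := IsSemiWeakCS Rᵐᵒᵖ R

/-- `R` is left semi-weak-CS. -/
def IsLeftSemiWeakCSRing (R : Type*) [Ring R] : Prop := IsSemiWeakCS R R

/-- The left square-free transfer condition `LSF`: if the right regular module `T_T` is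
summand-square-free then the left regular module `_TT` is square-free. -/
def LSF (T : Type*) [Ring T] : Prop :=
  IsSummandSquareFree Tᵐᵒᵖ T → IsSquareFreeModule T T

end C4Defs

section Corner

variable {T : Type*} [Ring T]

/-- The corner `eTe = {x : T | e * x = x ∧ x * e = x}` as a non-unital subring. -/
def cornerSubring (e : T) : NonUnitalSubring T where
  carrier := {x : T | e * x = x ∧ x * e = x}
  add_mem' := by
    rintro a b ⟨ha1, ha2⟩ ⟨hb1, hb2⟩
    exact ⟨by rw [mul_add, ha1, hb1], by rw [add_mul, ha2, hb2]⟩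
  zero_mem' := ⟨mul_zero e, zero_mul e⟩
  neg_mem' := by
    rintro a ⟨ha1, ha2⟩
    exact ⟨by rw [mul_neg, ha1], by rw [neg_mul, ha2]⟩
  mul_mem' := by
    rintro a b ⟨ha1, ha2⟩ ⟨hb1, hb2⟩
    exact ⟨by rw [← mul_assoc, ha1], by rw [mul_assoc, hb2]⟩

theorem mem_cornerSubring {e x : T} :
    x ∈ cornerSubring e ↔ e * x = x ∧ x * e = x := Iff.rfl

/-- The corner ring `eTe` associated to an idempotent `e` of `T`; its identity is `e`. -/
def Corner (e : T) (he : IsIdempotentElem e) : Type _ := ↥(cornerSubring e)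

instance {e : T} {he : IsIdempotentElem e} : Ring (Corner e he) :=
  { (inferInstance : NonUnitalRing ↥(cornerSubring e)) with
    one := ⟨e, he, he⟩
    one_mul := fun x => Subtype.ext (mem_cornerSubring.mp x.2).1
    mul_one := fun x => Subtype.ext (mem_cornerSubring.mp x.2).2 }

/-- `eT = {x : T | e * x = x}` as an additive subgroup; it is a left module over the
corner ring `eTe`. -/
def leftPart (e : T) : AddSubgroup T where
  carrier := {x : T | e * x = x}
  add_mem' := by
    intro a b ha hb
    simp only [Set.mem_setOf_eq] at *
    rw [mul_add, ha, hb]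
  zero_mem' := mul_zero e
  neg_mem' := by
    intro a ha
    simp only [Set.mem_setOf_eq] at *
    rw [mul_neg, ha]

/-- `Te = {x : T | x * e = x}` as an additive subgroup; it is a right module over the
corner ring `eTe`. -/
def rightPart (e : T) : AddSubgroup T where
  carrier := {x : T | x * e = x}
  add_mem' := by
    intro a b ha hb
    simp only [Set.mem_setOf_eq] at *
    rw [add_mul, ha, hb]
  zero_mem' := zero_mul e
  neg_mem' := by
    intro a ha
    simp only [Set.mem_setOf_eq] at *
    rw [neg_mul, ha]

theorem mem_leftPart {e x : T} : x ∈ leftPart e ↔ e * x = x := Iff.rfl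

theorem mem_rightPart {e x : T} : x ∈ rightPart e ↔ x * e = x := Iff.rfl

/-- `eT` is a (unital) left module over the corner ring `eTe`. -/
instance {e : T} {he : IsIdempotentElem e} : Module (Corner e he) ↥(leftPart e) where
  smul c x := ⟨c.1 * x.1, by
    have h1 : e * c.1 = c.1 := (mem_cornerSubring.mp c.2).1
    show e * (c.1 * x.1) = c.1 * x.1
    rw [← mul_assoc, h1]⟩
  one_smul x := Subtype.ext (by
    show e * x.1 = x.1
    exact mem_leftPart.mp x.2)
  mul_smul a b x := Subtype.ext (by
    show (a.1 * b.1) * x.1 = a.1 * (b.1 * x.1)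
    rw [mul_assoc])
  smul_zero a := Subtype.ext (by
    show a.1 * 0 = 0
    exact mul_zero _)
  smul_add a x y := Subtype.ext (by
    show a.1 * (x.1 + y.1) = a.1 * x.1 + a.1 * y.1
    exact mul_add _ _ _)
  add_smul a b x := Subtype.ext (by
    show (a.1 + b.1) * x.1 = a.1 * x.1 + b.1 * x.1
    exact add_mul _ _ _)
  zero_smul x := Subtype.ext (by
    show (0 : T) * x.1 = 0
    exact zero_mul _)

/-- `Te` is a (unital) right module over the corner ring `eTe`, i.e. a module over
`(eTe)ᵐᵒᵖ`. -/
instance {e : T} {he : IsIdempotentElem e} : Module (Corner e he)ᵐᵒᵖ ↥(rightPart e) where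
  smul c x := ⟨x.1 * (unop c).1, by
    have h2 : (unop c).1 * e = (unop c).1 := (mem_cornerSubring.mp (unop c).2).2
    show (x.1 * (unop c).1) * e = x.1 * (unop c).1
    rw [mul_assoc, h2]⟩
  one_smul x := Subtype.ext (by
    show x.1 * e = x.1
    exact mem_rightPart.mp x.2)
  mul_smul a b x := Subtype.ext (by
    show x.1 * ((unop b).1 * (unop a).1) = (x.1 * (unop b).1) * (unop a).1
    rw [mul_assoc])
  smul_zero a := Subtype.ext (by
    show (0 : T) * (unop a).1 = 0
    exact zero_mul _)
  smul_add a x y := Subtype.ext (by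
    show (x.1 + y.1) * (unop a).1 = x.1 * (unop a).1 + y.1 * (unop a).1
    exact add_mul _ _ _)
  add_smul a b x := Subtype.ext (by
    show x.1 * ((unop a).1 + (unop b).1) = x.1 * (unop a).1 + x.1 * (unop b).1
    exact mul_add _ _ _)
  zero_smul x := Subtype.ext (by
    show x.1 * (0 : T) = 0
    exact mul_zero _)

/-- The hereditary side-transfer condition `HST`: for every idempotent `e` of `T`, if the
module `eT`/`Te` is summand-square-free as a right `eTe`-module (formalized on the carrier
`Te = rightPart e`, which carries the unital right `eTe`-action; at `e = 1` this is the right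
regular module `T_T`), then the left `eTe`-module (carrier `eT = leftPart e`, carrying the
unital left `eTe`-action; at `e = 1` this is the left regular module `_TT`) is square-free. -/
def HST (T : Type*) [Ring T] : Prop :=
  ∀ (e : T) (he : IsIdempotentElem e),
    IsSummandSquareFree (Corner e he)ᵐᵒᵖ ↥(rightPart e) →
      IsSquareFreeModule (Corner e he) ↥(leftPart e)

/-- The corner-stability axiom `CSA`: for every idempotent `e` of `T`, the left regular
module of the corner ring `eTe` is semi-weak-CS. -/
def CornerCSA (T : Type*) [Ring T] : Prop :=
  ∀ (e : T) (he : IsIdempotentElem e),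
    IsSemiWeakCS (Corner e he) (Corner e he)

end Corner

section SymmetryDatum

/-- A right-to-left symmetry datum on `R`: a ring decomposition `R ≅ S × T` where `S` is
semisimple artinian, the right regular module `T_T` is summand-square-free, the two ideals
`S`, `T` are orthogonal as right `R`-modules (no nonzero isomorphic right `R`-submodules),
and `T` satisfies `HST` and `CSA`. -/
structure RightToLeftSymmetryDatum (R S T : Type*) [Ring R] [Ring S] [Ring T] where
  iso : R ≃+* S × T
  semisimpleArtinian : IsSemisimpleRing S
  ssf : IsSummandSquareFree Tᵐᵒᵖ T
  orthogonal : ∀ A B : Submodule Rᵐᵒᵖ R,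
    (∀ a ∈ A, (iso a).2 = 0) → (∀ b ∈ B, (iso b).1 = 0) →
    A ≠ ⊥ → B ≠ ⊥ → IsEmpty (A ≃ₗ[Rᵐᵒᵖ] B)
  hst : HST T
  csa : CornerCSA T

end SymmetryDatum

section Beta

variable (R : Type*) [Ring R]

/-- The right annihilator `r_R(P) = {s : R | P s = 0}` of a right submodule `P` of `R`. -/
def rightAnnSet (P : Submodule Rᵐᵒᵖ R) : Set R := {s : R | ∀ p ∈ P, p * s = 0}

/-- The annihilator-bidual `β_r(P) = ℓ_R(r_R(P))`, as a right ideal of `R`. -/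
def betaR (P : Submodule Rᵐᵒᵖ R) : Submodule Rᵐᵒᵖ R where
  carrier := {r : R | ∀ s ∈ rightAnnSet R P, r * s = 0}
  add_mem' := by
    intro a b ha hb
    intro s hs
    rw [add_mul, ha s hs, hb s hs, add_zero]
  zero_mem' := by
    intro s hs
    exact zero_mul s
  smul_mem' := by
    intro c x hx s hs
    show (x * unop c) * s = 0
    rw [mul_assoc]
    refine hx _ ?_
    intro p hp
    rw [← mul_assoc]
    exact hs (p * unop c) (Submodule.smul_mem P c hp)

/-- A right ideal is a two-sided ideal which is a ring direct summand of `R` iff it is of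
the form `cR` for a central idempotent `c`. -/
def IsRingDirectSummandIdeal {R : Type*} [Ring R] (I : Submodule Rᵐᵒᵖ R) : Prop :=
  ∃ c : R, IsIdempotentElem c ∧ (∀ r : R, c * r = r * c) ∧ (∀ x : R, x ∈ I ↔ c * x = x)

/-- `R` has right semisimple annihilator asymmetry. -/
def HasRightSemisimpleAnnihilatorAsymmetry (R : Type*) [Ring R] : Prop :=
  ∃ P : Submodule Rᵐᵒᵖ R, IsSemisimpleModule Rᵐᵒᵖ P ∧ IsDirectSummand P ∧
    (¬ IsSemisimpleModule Rᵐᵒᵖ (betaR R P) ∨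
     (IsSemisimpleModule Rᵐᵒᵖ (betaR R P) ∧ ¬ IsRingDirectSummandIdeal (betaR R P)) ∨
     ¬ IsEssentialIn P (betaR R P))

end Beta


section MyHelpers

open Submodule LinearMap

variable {R : Type*} [Ring R]

/-! ### Transfer of module-theoretic properties along a surjective ring hom and a
compatible additive isomorphism. -/

section Transfer

variable {S M N : Type*} [Ring S] [AddCommGroup M] [AddCommGroup N]
  [Module R M] [Module S N]

/-- The order isomorphism between submodule lattices induced by a surjective ring hom
`π : R →+* S` and a compatible additive equivalence `ε : M ≃+ N`. -/
def tSubIso (π : R →+* S) (hπ : Function.Surjective π) (ε : M ≃+ N)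
    (hε : ∀ (r : R) (x : M), ε (r • x) = π r • ε x) :
    Submodule R M ≃o Submodule S N where
  toFun p :=
    { carrier := ε.symm ⁻¹' (p : Set M)
      add_mem' := fun {a b} ha hb => by
        simp only [Set.mem_preimage, SetLike.mem_coe, map_add] at *
        exact add_mem ha hb
      zero_mem' := by
        simp only [Set.mem_preimage, SetLike.mem_coe, map_zero]
        exact zero_mem p
      smul_mem' := by
        intro s y hy
        obtain ⟨r, rfl⟩ := hπ s
        have hkey : ε.symm (π r • y) = r • ε.symm y := by
          apply ε.injective
          rw [hε, AddEquiv.apply_symm_apply, AddEquiv.apply_symm_apply]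
        simp only [Set.mem_preimage, SetLike.mem_coe] at *
        rw [hkey]
        exact smul_mem p r hy }
  invFun q :=
    { carrier := ε ⁻¹' (q : Set N)
      add_mem' := fun {a b} ha hb => by
        simp only [Set.mem_preimage, SetLike.mem_coe, map_add] at *
        exact add_mem ha hb
      zero_mem' := by
        simp only [Set.mem_preimage, SetLike.mem_coe, map_zero]
        exact zero_mem q
      smul_mem' := by
        intro r x hx
        simp only [Set.mem_preimage, SetLike.mem_coe] at *
        rw [hε]
        exact smul_mem q (π r) hx }
  left_inv p := by
    ext x
    simp [Submodule.mem_mk, AddSubmonoid.mem_mk, AddSubsemigroup.mem_mk]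
  right_inv q := by
    ext y
    simp [Submodule.mem_mk, AddSubmonoid.mem_mk, AddSubsemigroup.mem_mk]
  map_rel_iff' := by
    intro p q
    constructor
    · intro h x hx
      have : ε.symm (ε x) ∈ p := by simpa using hx
      have h2 := h (show ε x ∈ _ from by simpa using hx)
      simpa using h2
    · intro h y hy
      exact h hy

theorem mem_tSubIso {π : R →+* S} {hπ : Function.Surjective π} {ε : M ≃+ N}
    {hε : ∀ (r : R) (x : M), ε (r • x) = π r • ε x} {p : Submodule R M} {y : N} :
    y ∈ tSubIso π hπ ε hε p ↔ ε.symm y ∈ p := Iff.rfl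

/-- The canonical additive equivalence between a submodule and its transfer. -/
def tCoe (π : R →+* S) (hπ : Function.Surjective π) (ε : M ≃+ N)
    (hε : ∀ (r : R) (x : M), ε (r • x) = π r • ε x) (p : Submodule R M) :
    p ≃+ (tSubIso π hπ ε hε p) where
  toFun x := ⟨ε x.1, by
    show ε.symm (ε x.1) ∈ p
    rw [AddEquiv.symm_apply_apply]
    exact x.2⟩
  invFun y := ⟨ε.symm y.1, y.2⟩
  left_inv x := Subtype.ext (ε.symm_apply_apply x.1)
  right_inv y := Subtype.ext (ε.apply_symm_apply y.1)
  map_add' x y := Subtype.ext (map_add ε x.1 y.1)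

theorem tCoe_smul {π : R →+* S} {hπ : Function.Surjective π} {ε : M ≃+ N}
    {hε : ∀ (r : R) (x : M), ε (r • x) = π r • ε x} {p : Submodule R M}
    (r : R) (x : p) :
    tCoe π hπ ε hε p (r • x) = π r • tCoe π hπ ε hε p x :=
  Subtype.ext (hε r x.1)

theorem tCoe_symm_smul {π : R →+* S} {hπ : Function.Surjective π} {ε : M ≃+ N}
    {hε : ∀ (r : R) (x : M), ε (r • x) = π r • ε x} {p : Submodule R M}
    (r : R) (y : (tSubIso π hπ ε hε p)) :
    (tCoe π hπ ε hε p).symm (π r • y) = r • (tCoe π hπ ε hε p).symm y := by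
  apply (tCoe π hπ ε hε p).injective
  rw [tCoe_smul, AddEquiv.apply_symm_apply, AddEquiv.apply_symm_apply]

/-- Transfer of a linear equivalence between submodules along `tSubIso`. -/
def tEquiv (π : R →+* S) (hπ : Function.Surjective π) (ε : M ≃+ N)
    (hε : ∀ (r : R) (x : M), ε (r • x) = π r • ε x)
    (A B : Submodule R M) (g : A ≃ₗ[R] B) :
    (tSubIso π hπ ε hε A) ≃ₗ[S] (tSubIso π hπ ε hε B) where
  toFun y := tCoe π hπ ε hε B (g ((tCoe π hπ ε hε A).symm y))
  invFun y := tCoe π hπ ε hε A (g.symm ((tCoe π hπ ε hε B).symm y))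
  left_inv y := by simp
  right_inv y := by simp
  map_add' y z := by simp
  map_smul' s y := by
    obtain ⟨r, rfl⟩ := hπ s
    simp only [RingHom.id_apply, tCoe_symm_smul, map_smul, tCoe_smul]

theorem tSubIso_eq_bot_iff {π : R →+* S} {hπ : Function.Surjective π} {ε : M ≃+ N}
    {hε : ∀ (r : R) (x : M), ε (r • x) = π r • ε x} {p : Submodule R M} :
    tSubIso π hπ ε hε p = ⊥ ↔ p = ⊥ := by
  rw [← (tSubIso π hπ ε hε).map_bot]
  exact (tSubIso π hπ ε hε).injective.eq_iff

theorem transfer_sqf (π : R →+* S) (hπ : Function.Surjective π) (ε : M ≃+ N)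
    (hε : ∀ (r : R) (x : M), ε (r • x) = π r • ε x)
    (h : IsSquareFreeModule S N) : IsSquareFreeModule R M := by
  intro A B hA hB hAB
  refine ⟨fun g => ?_⟩
  refine (h (tSubIso π hπ ε hε A) (tSubIso π hπ ε hε B) ?_ ?_ ?_).false
    (tEquiv π hπ ε hε A B g)
  · exact fun hb => hA (tSubIso_eq_bot_iff.mp hb)
  · exact fun hb => hB (tSubIso_eq_bot_iff.mp hb)
  · rw [← (tSubIso π hπ ε hε).map_inf, hAB, (tSubIso π hπ ε hε).map_bot]

theorem transfer_ssf (π : R →+* S) (hπ : Function.Surjective π) (ε : M ≃+ N)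
    (hε : ∀ (r : R) (x : M), ε (r • x) = π r • ε x)
    (h : IsSummandSquareFree S N) : IsSummandSquareFree R M := by
  intro A B hsA hsB hA hB hAB
  refine ⟨fun g => ?_⟩
  refine (h (tSubIso π hπ ε hε A) (tSubIso π hπ ε hε B) ?_ ?_ ?_ ?_ ?_).false
    (tEquiv π hπ ε hε A B g)
  · obtain ⟨C, hC⟩ := hsA
    exact ⟨tSubIso π hπ ε hε C, (tSubIso π hπ ε hε).isCompl hC⟩
  · obtain ⟨C, hC⟩ := hsB
    exact ⟨tSubIso π hπ ε hε C, (tSubIso π hπ ε hε).isCompl hC⟩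
  · exact fun hb => hA (tSubIso_eq_bot_iff.mp hb)
  · exact fun hb => hB (tSubIso_eq_bot_iff.mp hb)
  · rw [← (tSubIso π hπ ε hε).map_inf, hAB, (tSubIso π hπ ε hε).map_bot]

theorem transfer_ss (π : R →+* S) (hπ : Function.Surjective π) (ε : M ≃+ N)
    (hε : ∀ (r : R) (x : M), ε (r • x) = π r • ε x)
    (h : IsSemisimpleModule S N) : IsSemisimpleModule R M := by
  letI : ComplementedLattice (Submodule S N) := h.toComplementedLattice
  exact (isSemisimpleModule_iff R M).mpr (tSubIso π hπ ε hε).symm.complementedLattice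

end Transfer

/-! ### Elementary lemmas -/

theorem ss_of_injective {M N : Type*} [AddCommGroup M] [AddCommGroup N]
    [Module R M] [Module R N] (j : M →ₗ[R] N) (hj : Function.Injective j)
    (hN : IsSemisimpleModule R N) : IsSemisimpleModule R M := by
  letI := hN
  exact IsSemisimpleModule.congr (LinearEquiv.ofInjective j hj)

theorem sqf_of_injective {M N : Type*} [AddCommGroup M] [AddCommGroup N]
    [Module R M] [Module R N] (j : M →ₗ[R] N) (hj : Function.Injective j)
    (hN : IsSquareFreeModule R N) : IsSquareFreeModule R M := by
  intro A B hA hB hAB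
  refine ⟨fun g => ?_⟩
  refine (hN (A.map j) (B.map j) ?_ ?_ ?_).false
    (((Submodule.equivMapOfInjective j hj A).symm.trans g).trans
      (Submodule.equivMapOfInjective j hj B))
  · intro hb
    apply hA
    rw [eq_bot_iff]
    intro x hx
    have : j x ∈ A.map j := Submodule.mem_map_of_mem hx
    rw [hb, Submodule.mem_bot] at this
    have : j x = j 0 := by rw [this, map_zero]
    simpa [Submodule.mem_bot] using hj this
  · intro hb
    apply hB
    rw [eq_bot_iff]
    intro x hx
    have : j x ∈ B.map j := Submodule.mem_map_of_mem hx
    rw [hb, Submodule.mem_bot] at this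
    have : j x = j 0 := by rw [this, map_zero]
    simpa [Submodule.mem_bot] using hj this
  · rw [← Submodule.map_inf _ hj, hAB, Submodule.map_bot]

theorem bot_of_subsingleton {M : Type*} [AddCommGroup M] [Module R M]
    {p : Submodule R M} (h : Subsingleton p) : p = ⊥ := by
  rw [eq_bot_iff]
  intro x hx
  have : (⟨x, hx⟩ : p) = ⟨0, zero_mem p⟩ := Subsingleton.elim _ _
  simpa [Submodule.mem_bot] using congrArg Subtype.val this

theorem sqf_pair {M : Type*} [AddCommGroup M] [Module R M]
    {W U V : Submodule R M} (hW : IsSquareFreeModule R W)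
    (hU : U ≤ W) (hV : V ≤ W) (hUV : U ⊓ V = ⊥) (g : U ≃ₗ[R] V) :
    U = ⊥ ∧ V = ⊥ := by
  by_cases hU0 : U = ⊥
  · refine ⟨hU0, ?_⟩
    apply bot_of_subsingleton
    haveI : Subsingleton U := by rw [hU0]; infer_instance
    exact g.symm.toEquiv.subsingleton
  · exfalso
    have hV0 : V ≠ ⊥ := by
      intro hV0
      apply hU0
      apply bot_of_subsingleton
      haveI : Subsingleton V := by rw [hV0]; infer_instance
      exact g.toEquiv.subsingleton
    have hmap : ∀ {X : Submodule R M}, X ≤ W → Submodule.map W.subtype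
        (Submodule.comap W.subtype X) = X := by
      intro X hX
      rw [Submodule.map_comap_subtype]
      exact inf_eq_right.mpr hX
    refine (hW (Submodule.comap W.subtype U) (Submodule.comap W.subtype V) ?_ ?_ ?_).false
      (((Submodule.comapSubtypeEquivOfLe hU).trans g).trans
        (Submodule.comapSubtypeEquivOfLe hV).symm)
    · intro hb
      apply hU0
      rw [← hmap hU, hb, Submodule.map_bot]
    · intro hb
      apply hV0
      rw [← hmap hV, hb, Submodule.map_bot]
    · rw [← Submodule.comap_inf, hUV]
      rw [Submodule.comap_bot, Submodule.ker_subtype]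

theorem summand_of_le_compl_ss {M : Type*} [AddCommGroup M] [Module R M]
    {p₁ p₂ x : Submodule R M} (hcompl : IsCompl p₁ p₂)
    (hss : IsSemisimpleModule R p₁) (hx : x ≤ p₁) : IsDirectSummand x := by
  letI := hss
  obtain ⟨y', hy'⟩ := exists_isCompl (Submodule.comap p₁.subtype x)
  have hxmap : Submodule.map p₁.subtype (Submodule.comap p₁.subtype x) = x := by
    rw [Submodule.map_comap_subtype]
    exact inf_eq_right.mpr hx
  set y := Submodule.map p₁.subtype y' with hy
  have hyle : y ≤ p₁ := Submodule.map_subtype_le p₁ y'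
  refine ⟨y ⊔ p₂, ?_, ?_⟩
  · rw [disjoint_iff]
    have h1 : (y ⊔ p₂) ⊓ p₁ = y := by
      rw [sup_inf_assoc_of_le p₂ hyle]
      rw [disjoint_iff.mp hcompl.disjoint.symm, sup_bot_eq]
    have h2 : x ⊓ (y ⊔ p₂) ≤ y := by
      calc x ⊓ (y ⊔ p₂) ≤ p₁ ⊓ (y ⊔ p₂) := inf_le_inf_right _ hx
        _ = y := by rw [inf_comm, h1]
    have h3 : x ⊓ (y ⊔ p₂) ≤ x ⊓ y := le_inf inf_le_left h2
    have h4 : x ⊓ y = ⊥ := by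
      rw [← hxmap, hy, ← Submodule.map_inf _ (Submodule.injective_subtype p₁),
        disjoint_iff.mp hy'.disjoint, Submodule.map_bot]
    exact le_bot_iff.mp (h4 ▸ h3)
  · rw [codisjoint_iff]
    rw [← sup_assoc, ← hxmap, hy, ← Submodule.map_sup,
      codisjoint_iff.mp hy'.codisjoint, Submodule.map_top, Submodule.range_subtype]
    exact codisjoint_iff.mp hcompl.codisjoint

/-! ### Central idempotent decomposition -/

section Idem

variable (M : Type*) [AddCommGroup M] [Module R M] (c : R)

/-- The `c = 1` eigenspace of a central idempotent. -/
def cOne (hcen : ∀ r : R, c * r = r * c) : Submodule R M where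
  carrier := {x | c • x = x}
  add_mem' := by
    intro a b ha hb
    simp only [Set.mem_setOf_eq] at *
    rw [smul_add, ha, hb]
  zero_mem' := smul_zero c
  smul_mem' := by
    intro r x hx
    simp only [Set.mem_setOf_eq] at *
    rw [← mul_smul, hcen, mul_smul, hx]

/-- The `c = 0` eigenspace of a central idempotent. -/
def cZero (hcen : ∀ r : R, c * r = r * c) : Submodule R M where
  carrier := {x | c • x = 0}
  add_mem' := by
    intro a b ha hb
    simp only [Set.mem_setOf_eq] at *
    rw [smul_add, ha, hb, add_zero]
  zero_mem' := smul_zero c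
  smul_mem' := by
    intro r x hx
    simp only [Set.mem_setOf_eq] at *
    rw [← mul_smul, hcen, mul_smul, hx, smul_zero]

variable {M c}

theorem mem_cOne {hcen : ∀ r : R, c * r = r * c} {x : M} :
    x ∈ cOne M c hcen ↔ c • x = x := Iff.rfl

theorem mem_cZero {hcen : ∀ r : R, c * r = r * c} {x : M} :
    x ∈ cZero M c hcen ↔ c • x = 0 := Iff.rfl

theorem isCompl_cOne_cZero (hc : IsIdempotentElem c) (hcen : ∀ r : R, c * r = r * c) :
    IsCompl (cOne M c hcen) (cZero M c hcen) := by
  constructor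
  · rw [disjoint_iff, eq_bot_iff]
    rintro x ⟨h1, h0⟩
    rw [Submodule.mem_bot]
    rw [← mem_cOne.mp h1]
    exact mem_cZero.mp h0
  · rw [codisjoint_iff, eq_top_iff]
    intro x _
    rw [Submodule.mem_sup]
    refine ⟨c • x, ?_, x - c • x, ?_, add_sub_cancel _ _⟩
    · show c • (c • x) = c • x
      rw [← mul_smul, hc]
    · show c • (x - c • x) = 0
      rw [smul_sub, ← mul_smul, hc, sub_self]

theorem le_cOne_of_inf_cZero (hc : IsIdempotentElem c) (hcen : ∀ r : R, c * r = r * c)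
    {U : Submodule R M} (h : U ⊓ cZero M c hcen = ⊥) : U ≤ cOne M c hcen := by
  intro x hx
  have hmem : x - c • x ∈ U ⊓ cZero M c hcen := by
    refine ⟨sub_mem hx (U.smul_mem c hx), ?_⟩
    show c • (x - c • x) = 0
    rw [smul_sub, ← mul_smul, hc, sub_self]
  rw [h, Submodule.mem_bot, sub_eq_zero] at hmem
  exact mem_cOne.mpr hmem.symm

/-- Inclusion of the `cOne` part of a submodule into the `cOne` part of the ambient module. -/
def cOneIncl (hcen : ∀ r : R, c * r = r * c) (D : Submodule R M) :
    cOne (↥D) c hcen →ₗ[R] cOne M c hcen where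
  toFun x := ⟨(x.1 : M), by
    have h := congrArg (Subtype.val) (mem_cOne.mp x.2)
    exact mem_cOne.mpr h⟩
  map_add' x y := rfl
  map_smul' r x := rfl

theorem cOneIncl_injective (hcen : ∀ r : R, c * r = r * c) (D : Submodule R M) :
    Function.Injective (cOneIncl hcen D) := by
  intro a b hab
  have := congrArg Subtype.val hab
  exact Subtype.ext (Subtype.ext this)

/-- Inclusion of the `cZero` part of a submodule into the `cZero` part of the ambient
module. -/
def cZeroIncl (hcen : ∀ r : R, c * r = r * c) (D : Submodule R M) :
    cZero (↥D) c hcen →ₗ[R] cZero M c hcen where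
  toFun x := ⟨(x.1 : M), by
    have h := congrArg (Subtype.val) (mem_cZero.mp x.2)
    exact mem_cZero.mpr h⟩
  map_add' x y := rfl
  map_smul' r x := rfl

theorem cZeroIncl_injective (hcen : ∀ r : R, c * r = r * c) (D : Submodule R M) :
    Function.Injective (cZeroIncl hcen D) := by
  intro a b hab
  have := congrArg Subtype.val hab
  exact Subtype.ext (Subtype.ext this)

/-- Restriction of a linear equivalence between submodules to their `cZero` parts. -/
theorem equiv_restrict_cZero (hcen : ∀ r : R, c * r = r * c)
    {U V : Submodule R M} (g : U ≃ₗ[R] V) :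
    Nonempty ((U ⊓ cZero M c hcen : Submodule R M) ≃ₗ[R]
      (V ⊓ cZero M c hcen : Submodule R M)) := by
  have key : ∀ x : U, ((x : M) ∈ cZero M c hcen ↔ ((g x : V) : M) ∈ cZero M c hcen) := by
    intro x
    have h2 : ((g (c • x) : V) : M) = c • ((g x : V) : M) := by rw [map_smul]; rfl
    constructor
    · intro h
      have hx0 : c • x = (0 : U) := Subtype.ext (mem_cZero.mp h)
      rw [mem_cZero, ← h2, hx0, map_zero]
      rfl
    · intro h
      have : g (c • x) = 0 := Subtype.ext (by rw [h2]; exact mem_cZero.mp h)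
      have h3 : c • x = (0 : U) := g.injective (by rw [this, map_zero])
      exact mem_cZero.mpr (congrArg Subtype.val h3)
  set p : Submodule R U := Submodule.comap U.subtype (cZero M c hcen) with hp
  set q : Submodule R V := Submodule.comap V.subtype (cZero M c hcen) with hq
  have hmapg : p.map (g : U →ₗ[R] V) = q := by
    ext y
    simp only [Submodule.mem_map, hp, hq, Submodule.mem_comap, Submodule.coe_subtype]
    constructor
    · rintro ⟨x, hx, rfl⟩
      exact (key x).mp hx
    · intro hy
      exact ⟨g.symm y, by
        have := (key (g.symm y)).mpr (by rw [g.apply_symm_apply]; exact hy)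
        exact this, g.apply_symm_apply y⟩
  have e1 : (U ⊓ cZero M c hcen : Submodule R M) = Submodule.map U.subtype p := by
    rw [hp, Submodule.map_comap_subtype]
  have e2 : (V ⊓ cZero M c hcen : Submodule R M) = Submodule.map V.subtype q := by
    rw [hq, Submodule.map_comap_subtype]
  refine ⟨?_⟩
  exact (LinearEquiv.ofEq _ _ e1).trans
    ((Submodule.equivMapOfInjective U.subtype (Submodule.injective_subtype U) p).symm.trans
      ((g.ofSubmodules p q hmapg).trans
        ((Submodule.equivMapOfInjective V.subtype (Submodule.injective_subtype V) q).trans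
          (LinearEquiv.ofEq _ _ e2.symm))))

end Idem

/-! ### The key C4 lemma -/

theorem key_c4 {M : Type*} [AddCommGroup M] [Module R M] (c : R)
    (hc : IsIdempotentElem c) (hcen : ∀ r : R, c * r = r * c)
    (h1 : IsSemisimpleModule R (cOne M c hcen))
    (h0 : IsSquareFreeModule R (cZero M c hcen)) :
    IsC4Module R M := by
  intro A B hAB f hker
  obtain ⟨K, hK⟩ := hker
  set φ : A →ₗ[R] M := B.subtype.comp f with hφ
  have hkerφ : LinearMap.ker φ = LinearMap.ker f := by
    rw [hφ, LinearMap.ker_comp, Submodule.ker_subtype, Submodule.comap_bot]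
  set θ : K →ₗ[R] M := φ.comp K.subtype with hθ
  have hθinj : Function.Injective θ := by
    rw [← LinearMap.ker_eq_bot, hθ, LinearMap.ker_comp, hkerφ, eq_bot_iff]
    intro x hx
    have hx1 : (x : A) ∈ LinearMap.ker f ⊓ K := ⟨hx, x.2⟩
    rw [disjoint_iff.mp hK.disjoint, Submodule.mem_bot] at hx1
    rw [Submodule.mem_bot]
    exact Subtype.ext hx1
  have hrangeθ : LinearMap.range θ = LinearMap.range φ := by
    apply le_antisymm
    · rw [hθ]
      exact LinearMap.range_comp_le_range _ _
    · rintro y ⟨x, rfl⟩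
      have hx : (x : A) ∈ LinearMap.ker f ⊔ K := by
        rw [codisjoint_iff.mp hK.codisjoint]
        trivial
      rw [Submodule.mem_sup] at hx
      obtain ⟨u, hu, v, hv, huv⟩ := hx
      have hφu : φ u = 0 := by
        rw [← hkerφ] at hu
        exact hu
      refine ⟨⟨v, hv⟩, ?_⟩
      show φ v = φ x
      rw [← huv, map_add, hφu, zero_add]
  have hrangeφ : LinearMap.range φ = (LinearMap.range f).map B.subtype := by
    rw [hφ, LinearMap.range_comp]
  set K' : Submodule R M := K.map A.subtype with hK'
  set Im' : Submodule R M := (LinearMap.range f).map B.subtype with hIm'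
  have eK : (K' : Submodule R M) ≃ₗ[R] K :=
    (Submodule.equivMapOfInjective A.subtype (Submodule.injective_subtype A) K).symm
  have eθ : (K : Submodule R A) ≃ₗ[R] LinearMap.range θ := LinearEquiv.ofInjective θ hθinj
  have eIm : (LinearMap.range θ : Submodule R M) ≃ₗ[R] Im' :=
    LinearEquiv.ofEq _ _ (by rw [hrangeθ, hrangeφ])
  have e : (K' : Submodule R M) ≃ₗ[R] Im' := (eK.trans eθ).trans eIm
  have hK'A : K' ≤ A := Submodule.map_subtype_le A K
  have hIm'B : Im' ≤ B := Submodule.map_subtype_le B (LinearMap.range f)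
  have hKIm : K' ⊓ Im' = ⊥ := by
    rw [eq_bot_iff]
    intro x hx
    have : x ∈ A ⊓ B := ⟨hK'A hx.1, hIm'B hx.2⟩
    rwa [disjoint_iff.mp hAB.disjoint] at this
  obtain ⟨eres⟩ := equiv_restrict_cZero hcen e
  have hdis : (K' ⊓ cZero M c hcen) ⊓ (Im' ⊓ cZero M c hcen) = ⊥ := by
    rw [eq_bot_iff]
    rintro x ⟨hx1, hx2⟩
    have hx : x ∈ K' ⊓ Im' := ⟨hx1.1, hx2.1⟩
    rwa [hKIm] at hx
  have pair := sqf_pair h0 (inf_le_right (a := K')) (inf_le_right (a := Im')) hdis eres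
  have hImOne : Im' ≤ cOne M c hcen := le_cOne_of_inf_cZero hc hcen pair.2
  have hrange_le : LinearMap.range f ≤ cOne (↥B) c hcen := by
    intro y hy
    have hmem : (y : M) ∈ Im' := Submodule.mem_map_of_mem hy
    have h2 := mem_cOne.mp (hImOne hmem)
    exact mem_cOne.mpr (Subtype.ext h2)
  exact summand_of_le_compl_ss (isCompl_cOne_cZero hc hcen)
    (ss_of_injective (cOneIncl hcen B) (cOneIncl_injective hcen B) h1) hrange_le

end MyHelpers


section MyRingSpecific

open Submodule

/-! ### Square-freeness of the left regular module via `HST` at `e = 1` -/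

theorem squarefree_left_regular_of_hst {T : Type*} [Ring T]
    (hssf : IsSummandSquareFree Tᵐᵒᵖ T) (hhst : HST T) :
    IsSquareFreeModule T T := by
  have he : IsIdempotentElem (1 : T) := by
    show (1 : T) * 1 = 1
    rw [one_mul]
  -- transfer `hssf` to the corner module
  have hCop : IsSummandSquareFree (Corner (1 : T) he)ᵐᵒᵖ ↥(rightPart (1 : T)) := by
    refine transfer_ssf
      ({ toFun := fun x => op (unop x).1
         map_one' := rfl
         map_mul' := fun a b => rfl
         map_zero' := rfl
         map_add' := fun a b => rfl } : (Corner (1 : T) he)ᵐᵒᵖ →+* Tᵐᵒᵖ)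
      (fun y => ⟨op ⟨unop y, one_mul _, mul_one _⟩, rfl⟩)
      ({ toFun := fun x => x.1
         invFun := fun t => ⟨t, mul_one t⟩
         left_inv := fun x => Subtype.ext rfl
         right_inv := fun t => rfl
         map_add' := fun a b => rfl } : ↥(rightPart (1 : T)) ≃+ T)
      (fun r x => rfl) hssf
  have hL : IsSquareFreeModule (Corner (1 : T) he) ↥(leftPart (1 : T)) := hhst 1 he hCop
  refine transfer_sqf
    ({ toFun := fun t => (⟨t, one_mul t, mul_one t⟩ : Corner (1 : T) he)
       map_one' := Subtype.ext rfl
       map_mul' := fun a b => Subtype.ext rfl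
       map_zero' := Subtype.ext rfl
       map_add' := fun a b => Subtype.ext rfl } : T →+* Corner (1 : T) he)
    (fun y => ⟨y.1, Subtype.ext rfl⟩)
    ({ toFun := fun t => (⟨t, one_mul t⟩ : ↥(leftPart (1 : T)))
       invFun := fun x => x.1
       left_inv := fun t => rfl
       right_inv := fun x => Subtype.ext rfl
       map_add' := fun a b => Subtype.ext rfl } : T ≃+ ↥(leftPart (1 : T)))
    (fun r x => Subtype.ext rfl) hL

end MyRingSpecific

section MyMain

open Submodule

variable {S T : Type*} [Ring S] [Ring T]

private theorem main_hc : IsIdempotentElem (((1 : S), (0 : T)) : S × T) := by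
  show (((1 : S), (0 : T)) : S × T) * ((1 : S), (0 : T)) = ((1 : S), (0 : T))
  ext <;> simp

private theorem main_hcen :
    ∀ r : S × T, (((1 : S), (0 : T)) : S × T) * r = r * ((1 : S), (0 : T)) := by
  intro r
  ext <;> simp

/-- Semisimplicity of the `cOne` part of `S × T`. -/
theorem main_ss (hS : IsSemisimpleRing S) :
    IsSemisimpleModule (S × T) (cOne (S × T) ((1 : S), (0 : T)) main_hcen) := by
  refine transfer_ss (RingHom.fst S T) (fun s => ⟨(s, 1), rfl⟩)
    ({ toFun := fun x => x.1.1
       invFun := fun s => ⟨(s, 0), by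
         show (((1 : S), (0 : T)) : S × T) • ((s, 0) : S × T) = (s, 0)
         show (((1 : S), (0 : T)) : S × T) * (s, 0) = (s, 0)
         ext <;> simp⟩
       left_inv := fun x => by
         apply Subtype.ext
         have h := mem_cOne.mp x.2
         have h2 := congrArg Prod.snd h
         simp only [Prod.fst] at h2 ⊢
         have h3 : (0 : T) * x.1.2 = x.1.2 := h2
         rw [zero_mul] at h3
         exact Prod.ext rfl h3
       right_inv := fun s => rfl
       map_add' := fun a b => rfl } : ↥(cOne (S × T) ((1 : S), (0 : T)) main_hcen) ≃+ S)
    (fun r x => rfl) hS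

/-- Square-freeness of the `cZero` part of `S × T`. -/
theorem main_sqf (hT : IsSquareFreeModule T T) :
    IsSquareFreeModule (S × T) (cZero (S × T) ((1 : S), (0 : T)) main_hcen) := by
  refine transfer_sqf (RingHom.snd S T) (fun t => ⟨(1, t), rfl⟩)
    ({ toFun := fun x => x.1.2
       invFun := fun t => ⟨(0, t), by
         show (((1 : S), (0 : T)) : S × T) • ((0, t) : S × T) = 0
         show (((1 : S), (0 : T)) : S × T) * (0, t) = 0
         ext <;> simp⟩
       left_inv := fun x => by
         apply Subtype.ext
         have h := mem_cZero.mp x.2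
         have h2 := congrArg Prod.fst h
         have h3 : (1 : S) * x.1.1 = 0 := h2
         rw [one_mul] at h3
         exact Prod.ext h3.symm rfl
       right_inv := fun t => rfl
       map_add' := fun a b => rfl } : ↥(cZero (S × T) ((1 : S), (0 : T)) main_hcen) ≃+ T)
    (fun r x => rfl) hT

end MyMain

/-- Let `R = S × T` be a strongly right `C4*`-ring, where `S` is semisimple
artinian, the right regular module `T_T` is summand-square-free, and `T` satisfies `HST`
and `CSA`. Then `R` is a strongly left `C4*`-ring. -/
theorem right_to_left_strong_main {S T : Type*} [Ring S] [Ring T]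
    (h : IsStronglyRightC4StarRing (S × T))
    (hS : IsSemisimpleRing S)
    (hssf : IsSummandSquareFree Tᵐᵒᵖ T)
    (hhst : HST T) (hcsa : CornerCSA T) :
    IsStronglyLeftC4StarRing (S × T) := by
  classical
  have hc := main_hc (S := S) (T := T)
  have hcen := main_hcen (S := S) (T := T)
  have hTsqf : IsSquareFreeModule T T := squarefree_left_regular_of_hst hssf hhst
  have hss1 : IsSemisimpleModule (S × T) (cOne (S × T) ((1 : S), (0 : T)) main_hcen) :=
    main_ss hS
  have hsqf0 : IsSquareFreeModule (S × T) (cZero (S × T) ((1 : S), (0 : T)) main_hcen) :=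
    main_sqf hTsqf
  constructor
  · -- semi-weak-CS
    intro C hC
    have hle : ∀ t : SWTriple (S × T) (S × T), t ∈ C →
        t.X ≤ cOne (S × T) ((1 : S), (0 : T)) main_hcen ∧
        t.Y ≤ cOne (S × T) ((1 : S), (0 : T)) main_hcen := by
      intro t _
      obtain ⟨er⟩ := equiv_restrict_cZero main_hcen t.f
      have hdis : (t.X ⊓ cZero (S × T) ((1 : S), (0 : T)) main_hcen) ⊓
          (t.Y ⊓ cZero (S × T) ((1 : S), (0 : T)) main_hcen) = ⊥ := by
        rw [eq_bot_iff]
        rintro x ⟨hx1, hx2⟩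
        have hx : x ∈ t.X ⊓ t.Y := ⟨hx1.1, hx2.1⟩
        rwa [t.disj] at hx
      have pair := sqf_pair hsqf0 inf_le_right inf_le_right hdis er
      exact ⟨le_cOne_of_inf_cZero hc main_hcen pair.1,
        le_cOne_of_inf_cZero hc main_hcen pair.2⟩
    refine ⟨⨆ t ∈ C, t.X, ⨆ t ∈ C, t.Y, ?_, ?_, ?_, ?_⟩
    · exact summand_of_le_compl_ss (isCompl_cOne_cZero hc main_hcen) hss1
        (iSup₂_le fun t ht => (hle t ht).1)
    · exact summand_of_le_compl_ss (isCompl_cOne_cZero hc main_hcen) hss1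
        (iSup₂_le fun t ht => (hle t ht).2)
    · exact ⟨le_rfl, fun N hN hN0 => by rwa [inf_eq_right.mpr hN]⟩
    · exact ⟨le_rfl, fun N hN hN0 => by rwa [inf_eq_right.mpr hN]⟩
  · -- C4*
    intro N
    exact key_c4 ((1 : S), (0 : T)) hc main_hcen
      (ss_of_injective (cOneIncl main_hcen N) (cOneIncl_injective main_hcen N) hss1)
      (sqf_of_injective (cZeroIncl main_hcen N) (cZeroIncl_injective main_hcen N) hsqf0)
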